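/- Let c₁,…,c_s be the zeros of P_s − ζ P_{s−1} on [0,1] (assumed distinct) with weights b making the rule exact for polynomials of degree ≤ 2s−1. Then for 1 ≤ r ≤ s−1: ⟨P_{s+r−1}, P_{s−r}⟩_D = (γ_{s+r−1} γ_{s−r} / (γ_s γ_{s−1})) · ζ/(2s−1). -/

import Mathlib

/-- The shifted Legendre polynomial on `[0,1]`, `P_q(x) = (1/q!) dᵠ/dxᵠ [xᵠ(x-1)ᵠ]`. -/
noncomputable def legP (q : ℕ) : Polynomial ℝ :=
  (q.factorial : ℝ)⁻¹ • (Polynomial.derivative^[q] (Polynomial.X ^ q * (Polynomial.X - 1) ^ q))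

/-- `γ_ℓ = (2ℓ)!/(ℓ!)²`, the leading coefficient of `P_ℓ`. -/
noncomputable def legGamma (l : ℕ) : ℝ :=
  (Nat.factorial (2 * l) : ℝ) / ((Nat.factorial l : ℝ) ^ 2)

open Polynomial intervalIntegral

lemma pIntegrable (p : ℝ[X]) : IntervalIntegrable (fun x => p.eval x) MeasureTheory.volume 0 1 :=
  p.continuous.intervalIntegrable _ _

lemma pFTC (p : ℝ[X]) : ∫ x in (0:ℝ)..1, (derivative p).eval x = p.eval 1 - p.eval 0 := by
  have : (fun x => (derivative p).eval x) = deriv fun x => p.eval x := by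
    funext x; exact ((p.hasDerivAt x).deriv).symm
  rw [this]
  exact integral_deriv_eq_sub (fun x _ => (p.hasDerivAt x).differentiableAt)
    (by rw [← this]; exact pIntegrable _)

lemma pIBP (u v : ℝ[X]) (h0 : u.eval 0 = 0) (h1 : u.eval 1 = 0) :
    ∫ x in (0:ℝ)..1, (derivative u).eval x * v.eval x
      = - ∫ x in (0:ℝ)..1, u.eval x * (derivative v).eval x := by
  have h := pFTC (u * v)
  rw [derivative_mul] at h
  have h2 : ∫ x in (0:ℝ)..1, ((derivative u * v).eval x + (u * derivative v).eval x)
      = ∫ x in (0:ℝ)..1, (derivative u * v + u * derivative v).eval x := by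
    simp
  rw [← h2, integral_add (pIntegrable _) (pIntegrable _)] at h
  simp only [eval_mul, eval_add, h0, h1, zero_mul, mul_zero] at h ⊢
  linarith

noncomputable def Wp (q : ℕ) : ℝ[X] := X ^ q * (X - 1) ^ q

lemma Wp_monic (q : ℕ) : (Wp q).Monic := by
  have : (X - 1 : ℝ[X]) = X - C 1 := by simp
  exact (monic_X_pow q).mul (by rw [this]; exact (monic_X_sub_C 1).pow q)

lemma Wp_ne_zero (q : ℕ) : Wp q ≠ 0 := (Wp_monic q).ne_zero

lemma Wp_natDegree (q : ℕ) : (Wp q).natDegree = 2 * q := by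
  have : (X - 1 : ℝ[X]) = X - C 1 := by simp
  rw [Wp, natDegree_mul (pow_ne_zero _ X_ne_zero)
    (pow_ne_zero _ (by rw [this]; exact X_sub_C_ne_zero (R := ℝ) 1))]
  simp [this, natDegree_pow]
  ring

lemma Wp_root0 {j q : ℕ} (hj : j < q) : (derivative^[j] (Wp q)).eval 0 = 0 := by
  have : j < (Wp q).rootMultiplicity 0 := by
    refine lt_of_lt_of_le hj ?_
    rw [le_rootMultiplicity_iff (Wp_ne_zero q)]
    have : (X - C (0:ℝ)) ^ q = X ^ q := by simp
    rw [this, Wp]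
    exact dvd_mul_right _ _
  exact isRoot_iterate_derivative_of_lt_rootMultiplicity this

lemma Wp_root1 {j q : ℕ} (hj : j < q) : (derivative^[j] (Wp q)).eval 1 = 0 := by
  have : j < (Wp q).rootMultiplicity 1 := by
    refine lt_of_lt_of_le hj ?_
    rw [le_rootMultiplicity_iff (Wp_ne_zero q)]
    have : (X - C (1:ℝ)) ^ q = (X - 1) ^ q := by simp
    rw [this, Wp]
    exact dvd_mul_left _ _
  exact isRoot_iterate_derivative_of_lt_rootMultiplicity this

lemma keyIBP (q : ℕ) (g : ℝ[X]) : ∀ k, k ≤ q →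
    ∫ x in (0:ℝ)..1, (derivative^[q] (Wp q)).eval x * g.eval x
      = (-1:ℝ)^k * ∫ x in (0:ℝ)..1, (derivative^[q-k] (Wp q)).eval x * (derivative^[k] g).eval x
  | 0, _ => by simp
  | (k+1), hk => by
    rw [keyIBP q g k (le_of_lt hk)]
    have hqk : q - k = (q - (k+1)) + 1 := by omega
    have h1 : derivative^[q-k] (Wp q) = derivative (derivative^[q-(k+1)] (Wp q)) := by
      rw [hqk, Function.iterate_succ_apply']
    have h2 : derivative^[k+1] g = derivative (derivative^[k] g) := Function.iterate_succ_apply' _ _ _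
    rw [h1, h2, pIBP _ _ (Wp_root0 (by omega)) (Wp_root1 (by omega))]
    ring

lemma orth_aux (q : ℕ) (g : ℝ[X]) (hg : derivative^[q] g = 0) :
    ∫ x in (0:ℝ)..1, (derivative^[q] (Wp q)).eval x * g.eval x = 0 := by
  rw [keyIBP q g q le_rfl, hg]
  simp

noncomputable def Jint (a b : ℕ) : ℝ := ∫ x in (0:ℝ)..1, x ^ a * (1 - x) ^ b

lemma Jint_zero (a : ℕ) : Jint a 0 = 1 / ((a:ℝ) + 1) := by
  simp [Jint, integral_pow]

lemma contPoly (a b : ℕ) : IntervalIntegrable (fun x:ℝ => x ^ a * (1-x) ^ b)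
    MeasureTheory.volume 0 1 :=
  ((continuous_pow a).mul ((continuous_const.sub continuous_id').pow b)).intervalIntegrable _ _

lemma Jint_step (a b : ℕ) : ((a:ℝ)+1) * Jint a (b+1) = ((b:ℝ)+1) * Jint (a+1) b := by
  have hd : derivative (X^(a+1) * (1-X)^(b+1) : ℝ[X])
      = C ((a:ℝ)+1) * (X^a * (1-X)^(b+1)) - C ((b:ℝ)+1) * (X^(a+1) * (1-X)^b) := by
    simp [derivative_mul, derivative_pow]
    ring
  have h := pFTC (X^(a+1) * (1-X)^(b+1) : ℝ[X])
  rw [hd] at h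
  simp only [eval_sub, eval_mul, eval_pow, eval_C, eval_X, eval_one] at h
  rw [integral_sub ((contPoly a (b+1)).const_mul _) ((contPoly (a+1) b).const_mul _),
    integral_const_mul, integral_const_mul] at h
  simp only [one_pow, sub_self, zero_pow (Nat.succ_ne_zero b), mul_zero, zero_pow
    (Nat.succ_ne_zero a), zero_mul, sub_zero] at h
  rw [Jint, Jint]
  linarith

lemma Jint_eq : ∀ (b a : ℕ), Jint a b = ((a.factorial : ℝ) * b.factorial) / ((a+b+1).factorial)
  | 0, a => by
    rw [Jint_zero]
    have : ((a + 0 + 1).factorial : ℝ) = ((a:ℝ)+1) * a.factorial := by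
      rw [Nat.add_zero, Nat.factorial_succ]; push_cast; ring
    rw [this]
    rw [Nat.factorial_zero]
    have ha : (a.factorial : ℝ) ≠ 0 := Nat.cast_ne_zero.mpr a.factorial_ne_zero
    field_simp
    norm_num
  | (b+1), a => by
    have h := Jint_step a b
    have hb := Jint_eq b (a+1)
    have ha1 : ((a:ℝ)+1) ≠ 0 := by positivity
    have key : Jint a (b+1) = ((b:ℝ)+1)/((a:ℝ)+1) * Jint (a+1) b := by
      field_simp
      linarith
    rw [key, hb]
    have e1 : ((a+1).factorial : ℝ) = ((a:ℝ)+1) * a.factorial := by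
      rw [Nat.factorial_succ]; push_cast; ring
    have e2 : (((b+1)).factorial : ℝ) = ((b:ℝ)+1) * b.factorial := by
      rw [Nat.factorial_succ]; push_cast; ring
    have e3 : (a + 1 + b + 1 : ℕ) = (a + (b+1) + 1 : ℕ) := by omega
    rw [e1, e2, e3]
    have hf : (((a + (b+1) + 1).factorial : ℝ)) ≠ 0 := Nat.cast_ne_zero.mpr (Nat.factorial_ne_zero _)
    field_simp

lemma int_Wp (n : ℕ) : ∫ x in (0:ℝ)..1, (Wp n).eval x = (-1:ℝ)^n * Jint n n := by
  rw [Jint, ← integral_const_mul]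
  apply intervalIntegral.integral_congr
  intro x _
  simp only [Wp, eval_mul, eval_pow, eval_sub, eval_X, eval_one]
  have : (x - 1) ^ n = (-1:ℝ)^n * (1-x)^n := by
    rw [← neg_sub, neg_pow]
  rw [this]; ring

lemma legP_eval (q : ℕ) (x : ℝ) :
    (legP q).eval x = (q.factorial : ℝ)⁻¹ * (derivative^[q] (Wp q)).eval x := by
  simp [legP, Wp]

lemma legGamma_pos (l : ℕ) : 0 < legGamma l := by
  have h1 : (0:ℝ) < (Nat.factorial (2*l) : ℝ) := by positivity
  have h2 : (0:ℝ) < ((Nat.factorial l : ℝ)^2) := by positivity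
  exact div_pos h1 h2

lemma legGamma_ne_zero (l : ℕ) : legGamma l ≠ 0 := (legGamma_pos l).ne'

lemma legP_coeff (q : ℕ) : (legP q).coeff q = legGamma q := by
  have hW : legP q = (q.factorial : ℝ)⁻¹ • derivative^[q] (Wp q) := rfl
  rw [hW, coeff_smul, coeff_iterate_derivative]
  have hq : q + q = 2 * q := by omega
  have hco : (Wp q).coeff (q + q) = 1 := by
    rw [hq, ← Wp_natDegree q]
    exact (Wp_monic q).coeff_natDegree
  rw [hco, hq]
  have h2q : 2*q - q = q := by omega
  have hfac : (q.factorial : ℝ) * ((2*q).descFactorial q : ℝ) = ((2*q).factorial : ℝ) := by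
    rw [← Nat.cast_mul, ← Nat.factorial_mul_descFactorial (show q ≤ 2*q by omega), h2q]
  have hq0 : (q.factorial : ℝ) ≠ 0 := Nat.cast_ne_zero.mpr q.factorial_ne_zero
  simp only [nsmul_eq_mul, smul_eq_mul, mul_one, legGamma]
  field_simp
  exact hfac

lemma legP_natDegree (q : ℕ) : (legP q).natDegree = q := by
  refine le_antisymm ?_ (le_natDegree_of_ne_zero ?_)
  · rw [show legP q = (q.factorial : ℝ)⁻¹ • derivative^[q] (Wp q) from rfl]
    refine (natDegree_smul_le _ _).trans ?_
    refine (natDegree_iterate_derivative _ _).trans ?_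
    rw [Wp_natDegree]; omega
  · rw [legP_coeff]; exact legGamma_ne_zero q

lemma legP_leadingCoeff (q : ℕ) : (legP q).leadingCoeff = legGamma q := by
  rw [leadingCoeff, legP_natDegree, legP_coeff]

lemma legP_ne_zero (q : ℕ) : legP q ≠ 0 := fun h => legGamma_ne_zero q (by
  rw [← legP_coeff q, h, coeff_zero])

lemma legP_orth (q : ℕ) (g : ℝ[X]) (hg : derivative^[q] g = 0) :
    ∫ x in (0:ℝ)..1, (legP q).eval x * g.eval x = 0 := by
  have : ∀ x : ℝ, (legP q).eval x * g.eval x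
      = (q.factorial : ℝ)⁻¹ * ((derivative^[q] (Wp q)).eval x * g.eval x) := by
    intro x; rw [legP_eval]; ring
  simp only [this]
  rw [integral_const_mul, orth_aux q g hg, mul_zero]

lemma legP_orth' (q : ℕ) (g : ℝ[X]) (hg : g.natDegree < q) :
    ∫ x in (0:ℝ)..1, (legP q).eval x * g.eval x = 0 :=
  legP_orth q g (iterate_derivative_eq_zero hg)

lemma int_legP_Xpow (n : ℕ) :
    ∫ x in (0:ℝ)..1, (legP n).eval x * x ^ n = Jint n n := by
  have hkey := keyIBP n (X ^ n) n le_rfl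
  have hDX : derivative^[n] (X ^ n : ℝ[X]) = (n.factorial : ℝ[X]) := by
    rw [iterate_derivative_X_pow_eq_smul, Nat.descFactorial_self, Nat.sub_self, pow_zero]
    rw [smul_eq_C_mul, mul_one, Polynomial.C_eq_natCast]
  rw [hDX, Nat.sub_self, Function.iterate_zero_apply] at hkey
  have hx : ∀ x : ℝ, (legP n).eval x * x ^ n
      = (n.factorial : ℝ)⁻¹ * ((derivative^[n] (Wp n)).eval x * (X ^ n : ℝ[X]).eval x) := by
    intro x; rw [legP_eval]; simp; ring
  simp only [hx]
  rw [integral_const_mul, hkey]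
  have h2 : ∫ x in (0:ℝ)..1, (Wp n).eval x * ((n.factorial : ℝ[X])).eval x
      = (n.factorial : ℝ) * ∫ x in (0:ℝ)..1, (Wp n).eval x := by
    rw [← integral_const_mul]
    apply intervalIntegral.integral_congr
    intro x _
    simp [mul_comm]
  rw [h2, int_Wp]
  have hq0 : (n.factorial : ℝ) ≠ 0 := Nat.cast_ne_zero.mpr n.factorial_ne_zero
  have hsq : ((-1:ℝ)^n) * ((-1:ℝ)^n) = 1 := by
    rw [← pow_add, ← two_mul, pow_mul]
    norm_num
  field_simp
  linear_combination (Jint n n) * hsq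

lemma int_legP_sq (n : ℕ) :
    ∫ x in (0:ℝ)..1, (legP n).eval x * (legP n).eval x = 1 / (2 * (n:ℝ) + 1) := by
  set h : ℝ[X] := legP n - C (legGamma n) * X ^ n with hh
  have hcoeff : h.coeff n = 0 := by
    rw [hh, coeff_sub, legP_coeff, coeff_C_mul, coeff_X_pow, if_pos rfl, mul_one, sub_self]
  have hdeg : h.natDegree ≤ n := by
    rw [hh]
    refine (natDegree_sub_le _ _).trans ?_
    simp only [legP_natDegree]
    refine max_le le_rfl ?_
    exact (natDegree_C_mul_le _ _).trans (natDegree_X_pow_le n)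
  have hhd : derivative^[n] h = 0 := by
    rcases eq_or_ne h 0 with h0 | h0
    · rw [h0]; simp
    · apply iterate_derivative_eq_zero
      rcases lt_or_eq_of_le hdeg with h1 | h1
      · exact h1
      · exfalso
        apply h0
        rw [← leadingCoeff_eq_zero, leadingCoeff, h1, hcoeff]
  have hsplit : ∀ x : ℝ, (legP n).eval x * (legP n).eval x
      = legGamma n * ((legP n).eval x * x ^ n) + (legP n).eval x * h.eval x := by
    intro x
    rw [hh]
    simp only [eval_sub, eval_mul, eval_C, eval_pow, eval_X]
    ring
  simp only [hsplit]
  have i1 : IntervalIntegrable (fun x:ℝ => (legP n).eval x * x ^ n) MeasureTheory.volume 0 1 :=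
    ((legP n).continuous.mul (continuous_pow n)).intervalIntegrable _ _
  have i2 : IntervalIntegrable (fun x:ℝ => (legP n).eval x * h.eval x) MeasureTheory.volume 0 1 :=
    ((legP n).continuous.mul h.continuous).intervalIntegrable _ _
  rw [integral_add (i1.const_mul _) i2, integral_const_mul, int_legP_Xpow,
    legP_orth n h hhd, add_zero, Jint_eq]
  rw [legGamma]
  have e1 : ((n + n + 1).factorial : ℝ) = (2*(n:ℝ)+1) * (2*n).factorial := by
    have : n + n + 1 = (2*n) + 1 := by omega
    rw [this, Nat.factorial_succ]
    push_cast
    ring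
  rw [e1]
  have h1 : ((2*n).factorial : ℝ) ≠ 0 := Nat.cast_ne_zero.mpr (Nat.factorial_ne_zero _)
  have h2 : (n.factorial : ℝ) ≠ 0 := Nat.cast_ne_zero.mpr n.factorial_ne_zero
  have h3 : (2*(n:ℝ)+1) ≠ 0 := by positivity
  field_simp

lemma int_legP_mul_top (n : ℕ) (g : ℝ[X]) (hg : g.natDegree ≤ n) :
    ∫ x in (0:ℝ)..1, (legP n).eval x * g.eval x
      = g.coeff n / legGamma n * (1 / (2 * (n:ℝ) + 1)) := by
  set k : ℝ := g.coeff n / legGamma n with hk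
  set h2 : ℝ[X] := g - C k * legP n with hh2
  have hcoeff : h2.coeff n = 0 := by
    rw [hh2, coeff_sub, coeff_C_mul, legP_coeff, hk,
      div_mul_cancel₀ _ (legGamma_ne_zero n), sub_self]
  have hdeg : h2.natDegree ≤ n := by
    rw [hh2]
    refine (natDegree_sub_le _ _).trans (max_le hg ?_)
    exact (natDegree_C_mul_le _ _).trans (legP_natDegree n).le
  have hhd : derivative^[n] h2 = 0 := by
    rcases eq_or_ne h2 0 with h0 | h0
    · rw [h0]; simp
    · apply iterate_derivative_eq_zero
      rcases lt_or_eq_of_le hdeg with h1 | h1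
      · exact h1
      · exact absurd (by rw [← leadingCoeff_eq_zero, leadingCoeff, h1, hcoeff]) h0
  have hsplit : ∀ x : ℝ, (legP n).eval x * g.eval x
      = k * ((legP n).eval x * (legP n).eval x) + (legP n).eval x * h2.eval x := by
    intro x
    have : g = C k * legP n + h2 := by rw [hh2]; ring
    rw [this]
    simp only [eval_add, eval_mul, eval_C]
    ring
  simp only [hsplit]
  have i1 : IntervalIntegrable (fun x:ℝ => (legP n).eval x * (legP n).eval x)
      MeasureTheory.volume 0 1 :=
    ((legP n).continuous.mul (legP n).continuous).intervalIntegrable _ _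
  have i2 : IntervalIntegrable (fun x:ℝ => (legP n).eval x * h2.eval x)
      MeasureTheory.volume 0 1 :=
    ((legP n).continuous.mul h2.continuous).intervalIntegrable _ _
  rw [integral_add (i1.const_mul _) i2, integral_const_mul, int_legP_sq,
    legP_orth n h2 hhd, add_zero]

theorem discrete_inner_product_zeta (s : ℕ) (ζ : ℝ) (b c : Fin s → ℝ)
    (hdist : Function.Injective c)
    (hzero : ∀ i, (legP s - Polynomial.C ζ * legP (s - 1)).eval (c i) = 0)
    (hexact : ∀ P : Polynomial ℝ, P.natDegree ≤ 2 * s - 1 →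
      ∑ i, b i * P.eval (c i) = ∫ x in (0:ℝ)..1, P.eval x)
    (r : ℕ) (hr1 : 1 ≤ r) (hr2 : r ≤ s - 1) :
    ∑ i, b i * (legP (s + r - 1)).eval (c i) * (legP (s - r)).eval (c i) =
      (legGamma (s + r - 1) * legGamma (s - r) / (legGamma s * legGamma (s - 1))) *
        (ζ / (2 * (s : ℝ) - 1)) := by
  obtain ⟨m, rfl⟩ : ∃ m, s = m + 2 := ⟨s - 2, by omega⟩
  obtain ⟨t, rfl⟩ : ∃ t, r = t + 1 := ⟨r - 1, by omega⟩
  have ht : t ≤ m := by omega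
  have e1 : m + 2 + (t + 1) - 1 = m + t + 2 := by omega
  have e3 : m + 2 - 1 = m + 1 := by omega
  have e2 : m + 2 - (t + 1) = m + 1 - t := by omega
  rw [e3] at hzero
  rw [e1, e2]
  set N := m + t + 2 with hN
  set K := m + 1 - t with hK
  set M : ℝ[X] := legP (m + 2) - C ζ * legP (m + 1) with hM
  -- facts about M
  have hMdeg : M.natDegree = m + 2 := by
    rw [hM]
    rw [natDegree_sub_eq_left_of_natDegree_lt, legP_natDegree]
    refine lt_of_le_of_lt ((natDegree_C_mul_le _ _).trans (legP_natDegree (m+1)).le) ?_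
    rw [legP_natDegree]
    omega
  have hMco : M.coeff (m + 2) = legGamma (m + 2) := by
    rw [hM, coeff_sub, legP_coeff, coeff_C_mul,
      coeff_eq_zero_of_natDegree_lt (by rw [legP_natDegree]; omega), mul_zero, sub_zero]
  have hMlc : M.leadingCoeff = legGamma (m + 2) := by
    rw [leadingCoeff, hMdeg, hMco]
  have hM0 : M ≠ 0 := fun h => legGamma_ne_zero (m+2) (by rw [← hMlc, h, leadingCoeff_zero])
  -- division
  set Mm : ℝ[X] := M * C (M.leadingCoeff)⁻¹ with hMm
  have hMmMonic : Mm.Monic := monic_mul_leadingCoeff_inv hM0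
  set R : ℝ[X] := legP N %ₘ Mm with hR
  set Q : ℝ[X] := C (M.leadingCoeff)⁻¹ * (legP N /ₘ Mm) with hQ
  have hdecomp : legP N = M * Q + R := by
    have h := modByMonic_add_div (legP N) Mm
    rw [← h, hQ, hMm]
    ring
  have hMmdeg : Mm.natDegree = m + 2 := by
    rw [hMm, natDegree_mul hM0 (by simp [hMlc, legGamma_ne_zero]), natDegree_C, add_zero, hMdeg]
  have hRdeg : R.natDegree ≤ m + 1 := by
    rcases eq_or_ne R 0 with h0 | h0
    · rw [h0, natDegree_zero]; omega
    · have := degree_modByMonic_lt (legP N) hMmMonic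
      rw [← hR] at this
      have h2 : R.natDegree < Mm.natDegree := natDegree_lt_natDegree h0 this
      omega
  have hsub : (legP N - R).natDegree = N := by
    rw [natDegree_sub_eq_left_of_natDegree_lt, legP_natDegree]
    rw [legP_natDegree]
    omega
  have hsubco : (legP N - R).coeff N = legGamma N := by
    rw [coeff_sub, legP_coeff, coeff_eq_zero_of_natDegree_lt (by omega), sub_zero]
  have hMQ : M * Q = legP N - R := by rw [hdecomp]; ring
  have hQ0 : Q ≠ 0 := by
    intro h
    rw [h, mul_zero] at hMQ
    have := hsub
    rw [← hMQ, natDegree_zero] at this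
    omega
  have hQdeg : Q.natDegree = t := by
    have h := hsub
    rw [← hMQ, natDegree_mul hM0 hQ0, hMdeg] at h
    omega
  have hQlc : Q.leadingCoeff = legGamma N / legGamma (m + 2) := by
    have h : M.leadingCoeff * Q.leadingCoeff = legGamma N := by
      rw [← leadingCoeff_mul, hMQ, leadingCoeff, hsub, hsubco]
    rw [hMlc] at h
    field_simp [legGamma_ne_zero (m+2)]
    linarith
  -- the product polynomial G
  set G : ℝ[X] := Q * legP K with hG
  have hGdeg : G.natDegree ≤ m + 1 := by
    rw [hG]
    refine natDegree_mul_le.trans ?_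
    rw [hQdeg, legP_natDegree]
    omega
  have hGco : G.coeff (m + 1) = legGamma N / legGamma (m + 2) * legGamma K := by
    have h := coeff_mul_degree_add_degree Q (legP K)
    rw [hQdeg, legP_natDegree, hQlc, legP_leadingCoeff] at h
    have : t + K = m + 1 := by omega
    rwa [this] at h
  -- node values
  have hnode : ∀ i, (legP N).eval (c i) = R.eval (c i) := by
    intro i
    rw [hdecomp, eval_add, eval_mul, hzero i, zero_mul, zero_add]
  -- quadrature
  have hsum : ∑ i, b i * (legP N).eval (c i) * (legP K).eval (c i)
      = ∑ i, b i * (R * legP K).eval (c i) := by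
    refine Finset.sum_congr rfl fun i _ => ?_
    rw [eval_mul, hnode i, mul_assoc]
  rw [hsum, hexact (R * legP K) (by
    refine natDegree_mul_le.trans ?_
    rw [legP_natDegree]
    omega)]
  -- the integral
  have hpoly : ∀ x : ℝ, (R * legP K).eval x
      = (legP N).eval x * (legP K).eval x - (legP (m+2)).eval x * G.eval x
        + ζ * ((legP (m+1)).eval x * G.eval x) := by
    intro x
    have hRe : R = legP N - M * Q := by rw [hdecomp]; ring
    rw [hRe, hM, hG]
    simp only [eval_sub, eval_mul, eval_add, eval_C]
    ring
  simp only [hpoly]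
  have ii : ∀ p q : ℝ[X], IntervalIntegrable (fun x => p.eval x * q.eval x)
      MeasureTheory.volume 0 1 := fun p q => (p.continuous.mul q.continuous).intervalIntegrable _ _
  rw [integral_add (IntervalIntegrable.sub (ii _ _) (ii _ _)) ((ii (legP (m+1)) G).const_mul ζ),
    integral_sub (ii _ _) (ii _ _), integral_const_mul]
  rw [int_legP_mul_top N (legP K) (by rw [legP_natDegree]; omega),
    int_legP_mul_top (m+2) G (by omega),
    int_legP_mul_top (m+1) G (by omega)]
  rw [coeff_eq_zero_of_natDegree_lt (by rw [legP_natDegree]; omega),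
    coeff_eq_zero_of_natDegree_lt (by omega), hGco]
  have hg1 : legGamma N ≠ 0 := legGamma_ne_zero N
  have hg2 : legGamma (m+2) ≠ 0 := legGamma_ne_zero (m+2)
  have hg3 : legGamma (m+1) ≠ 0 := legGamma_ne_zero (m+1)
  have hg4 : legGamma K ≠ 0 := legGamma_ne_zero K
  have hden : (2 * ((m:ℝ)+1) + 1) ≠ 0 := by positivity
  have hcast : 2 * ((m + 2 : ℕ) : ℝ) - 1 = 2 * ((m:ℝ)+1) + 1 := by push_cast; ring
  rw [hcast]
  push_cast
  field_simp
  ring
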